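/- Let K be a quadratic number field with ring of integers O_K, let σ be the nontrivial automorphism of K over ℚ, and let α, β ∈ O_K with I = ⟨α, β⟩ a nonzero ideal. Write q(x,y) = N_{K/ℚ}(-βx + αy)/N(I), a binary quadratic form with integer coefficients. For any homogeneous polynomial δ ∈ ℤ[x,y] of degree n, one has Res(q, δ) = ±1 if and only if Iⁿ = (δ(α, β)) as ideals of O_K. -/

import Mathlib

/-- Sylvester-style resultant of a binary quadratic form `q = Σ a k • x^k y^(2-k)`
and a binary degree-`n` form `δ = Σ t k • x^k y^(n-k)`:  the determinant of the
`(n+2) × (n+2)` Sylvester matrix whose first `n` rows carry the coefficients of `q`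
and whose last `2` rows carry the coefficients of `δ`. -/
def sylvesterDet {R : Type*} [CommRing R] (n : ℕ) (a : Fin 3 → R) (t : Fin (n + 1) → R) : R :=
  Matrix.det (Matrix.of fun i j : Fin (n + 2) =>
    if (i : ℕ) < n then
      if h : (i : ℕ) ≤ (j : ℕ) ∧ (j : ℕ) ≤ (i : ℕ) + 2 then
        a ⟨2 - ((j : ℕ) - (i : ℕ)), by omega⟩ else 0
    else
      if h : (i : ℕ) - n ≤ (j : ℕ) ∧ (j : ℕ) ≤ ((i : ℕ) - n) + n then
        t ⟨n - ((j : ℕ) - ((i : ℕ) - n)), by omega⟩ else 0)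

/-- Evaluation of the binary degree-`m` form with coefficients `a` at the point `(u, v)`. -/
def evalForm {R : Type*} [CommRing R] (m : ℕ) (a : Fin (m + 1) → R) (u v : R) : R :=
  ∑ i : Fin (m + 1), a i * u ^ (i : ℕ) * v ^ (m - (i : ℕ))

def sylMatrix {R : Type*} [CommRing R] (n : ℕ) (a : Fin 3 → R) (t : Fin (n + 1) → R) :
    Matrix (Fin (n + 2)) (Fin (n + 2)) R :=
  Matrix.of fun i j : Fin (n + 2) =>
    if (i : ℕ) < n then
      if h : (i : ℕ) ≤ (j : ℕ) ∧ (j : ℕ) ≤ (i : ℕ) + 2 then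
        a ⟨2 - ((j : ℕ) - (i : ℕ)), by omega⟩ else 0
    else
      if h : (i : ℕ) - n ≤ (j : ℕ) ∧ (j : ℕ) ≤ ((i : ℕ) - n) + n then
        t ⟨n - ((j : ℕ) - ((i : ℕ) - n)), by omega⟩ else 0

lemma sylvesterDet_eq {R : Type*} [CommRing R] (n : ℕ) (a : Fin 3 → R) (t : Fin (n + 1) → R) :
    sylvesterDet n a t = (sylMatrix n a t).det := rfl

lemma map_sylvesterDet {R S : Type*} [CommRing R] [CommRing S] (f : R →+* S) (n : ℕ)
    (a : Fin 3 → R) (t : Fin (n + 1) → R) :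
    f (sylvesterDet n a t) = sylvesterDet n (f ∘ a) (f ∘ t) := by
  rw [sylvesterDet_eq, sylvesterDet_eq, RingHom.map_det]
  congr 1
  ext i j
  simp only [RingHom.mapMatrix_apply, Matrix.map_apply, sylMatrix, Matrix.of_apply, apply_ite f, apply_dite f, map_zero,
    Function.comp_apply]

lemma map_evalForm {R S : Type*} [CommRing R] [CommRing S] (f : R →+* S) (m : ℕ)
    (a : Fin (m + 1) → R) (u v : R) :
    f (evalForm m a u v) = evalForm m (f ∘ a) (f u) (f v) := by
  simp [evalForm, map_sum, map_mul, map_pow]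

lemma smul_sylvesterDet {R : Type*} [CommRing R] (n : ℕ) (c : R) (a : Fin 3 → R)
    (t : Fin (n + 1) → R) :
    c ^ n * sylvesterDet n a t = sylvesterDet n (fun k => c * a k) t := by
  rw [sylvesterDet_eq, sylvesterDet_eq]
  have h : sylMatrix n (fun k => c * a k) t =
      (Matrix.diagonal (fun i : Fin (n + 2) => if (i : ℕ) < n then c else 1)) * sylMatrix n a t := by
    ext i j
    rw [Matrix.diagonal_mul]
    simp only [sylMatrix, Matrix.of_apply]
    split_ifs <;> simp
  rw [h, Matrix.det_mul, Matrix.det_diagonal]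
  rw [Fin.prod_univ_eq_prod_range (fun i => if i < n then c else (1:R)) (n+2),
    Finset.prod_range_succ, Finset.prod_range_succ]
  rw [if_neg (by omega : ¬ (n+1 < n)), if_neg (lt_irrefl n), mul_one, mul_one]
  rw [Finset.prod_congr rfl (fun i hi => if_pos (Finset.mem_range.mp hi)), Finset.prod_const,
    Finset.card_range]

lemma syl_rowsum_lt {R : Type*} [CommRing R] (n : ℕ) (a b a' b' u w : R) (t : Fin (n + 1) → R)
    (i : Fin (n + 2)) (hi : (i : ℕ) < n) :
    ∑ k : Fin (n + 2), sylMatrix n ![a*a', -(a*b'+a'*b), b*b'] t i k *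
        (u ^ (n + 1 - (k : ℕ)) * w ^ (k : ℕ)) =
      u ^ (n - 1 - (i : ℕ)) * w ^ (i : ℕ) * ((b * u - a * w) * (b' * u - a' * w)) := by
  have key : ∀ k : Fin (n + 2), sylMatrix n ![a*a', -(a*b'+a'*b), b*b'] t i k *
      (u ^ (n + 1 - (k : ℕ)) * w ^ (k : ℕ)) =
      (if k = (⟨(i:ℕ), by omega⟩ : Fin (n+2)) then b*b' * (u ^ (n+1-(i:ℕ)) * w ^ (i:ℕ)) else 0)
      + ((if k = (⟨(i:ℕ)+1, by omega⟩ : Fin (n+2)) then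
            -(a*b'+a'*b) * (u ^ (n-(i:ℕ)) * w ^ ((i:ℕ)+1)) else 0)
      + (if k = (⟨(i:ℕ)+2, by omega⟩ : Fin (n+2)) then
            a*a' * (u ^ (n-1-(i:ℕ)) * w ^ ((i:ℕ)+2)) else 0)) := by
    intro k
    simp only [sylMatrix, Matrix.of_apply, if_pos hi]
    by_cases h : (i:ℕ) ≤ (k:ℕ) ∧ (k:ℕ) ≤ (i:ℕ) + 2
    · rw [dif_pos h]
      have h3 : (k:ℕ) = (i:ℕ) ∨ (k:ℕ) = (i:ℕ)+1 ∨ (k:ℕ) = (i:ℕ)+2 := by omega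
      rcases h3 with h3 | h3 | h3
      · rw [if_pos (Fin.ext h3), if_neg (fun hc => by rw [Fin.ext_iff] at hc; simp at hc; omega),
          if_neg (fun hc => by rw [Fin.ext_iff] at hc; simp at hc; omega)]
        have hidx : (⟨2 - ((k:ℕ) - (i:ℕ)), by omega⟩ : Fin 3) = ⟨2, by omega⟩ :=
          Fin.ext (by simp; omega)
        rw [hidx, h3]
        show b*b' * _ = _
        rw [add_zero, add_zero]
      · rw [if_neg (fun hc => by rw [Fin.ext_iff] at hc; simp at hc; omega),
          if_pos (Fin.ext h3),
          if_neg (fun hc => by rw [Fin.ext_iff] at hc; simp at hc; omega)]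
        have hidx : (⟨2 - ((k:ℕ) - (i:ℕ)), by omega⟩ : Fin 3) = ⟨1, by omega⟩ :=
          Fin.ext (by simp; omega)
        rw [hidx, h3, show n+1-((i:ℕ)+1) = n-(i:ℕ) from by omega]
        show -(a*b'+a'*b) * _ = _
        rw [zero_add, add_zero]
      · rw [if_neg (fun hc => by rw [Fin.ext_iff] at hc; simp at hc; omega),
          if_neg (fun hc => by rw [Fin.ext_iff] at hc; simp at hc; omega),
          if_pos (Fin.ext h3)]
        have hidx : (⟨2 - ((k:ℕ) - (i:ℕ)), by omega⟩ : Fin 3) = ⟨0, by omega⟩ :=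
          Fin.ext (by simp; omega)
        rw [hidx, h3, show n+1-((i:ℕ)+2) = n-1-(i:ℕ) from by omega]
        show a*a' * _ = _
        rw [zero_add, zero_add]
    · rw [dif_neg h, zero_mul,
        if_neg (fun hc => by rw [Fin.ext_iff] at hc; simp at hc; omega),
        if_neg (fun hc => by rw [Fin.ext_iff] at hc; simp at hc; omega),
        if_neg (fun hc => by rw [Fin.ext_iff] at hc; simp at hc; omega)]
      simp
  rw [Finset.sum_congr rfl (fun k _ => key k), Finset.sum_add_distrib, Finset.sum_add_distrib,
    Finset.sum_ite_eq' Finset.univ, Finset.sum_ite_eq' Finset.univ, Finset.sum_ite_eq' Finset.univ]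
  simp only [Finset.mem_univ, if_pos]
  have e1 : n + 1 - (i:ℕ) = (n - 1 - (i:ℕ)) + 2 := by omega
  have e2 : n - (i:ℕ) = (n - 1 - (i:ℕ)) + 1 := by omega
  rw [e1, e2, pow_add, pow_add, pow_succ w, pow_add]
  ring

lemma evalForm_rev {R : Type*} [CommRing R] (n : ℕ) (t : Fin (n + 1) → R) (u w : R) :
    evalForm n t u w = ∑ m : Fin (n + 1), t ⟨n - (m : ℕ), by omega⟩ * u ^ (n - (m : ℕ)) * w ^ (m : ℕ) := by
  rw [evalForm, ← Equiv.sum_comp Fin.revPerm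
    (fun i : Fin (n+1) => t i * u ^ (i : ℕ) * w ^ (n - (i : ℕ)))]
  apply Finset.sum_congr rfl
  intro m _
  have hkn : (m : ℕ) < n + 1 := m.isLt
  have h1 : ((Fin.revPerm m : Fin (n+1)) : ℕ) = n - (m : ℕ) := by
    simp [Fin.revPerm, Fin.val_rev]
  have h2 : (Fin.revPerm m : Fin (n+1)) = ⟨n - (m : ℕ), by omega⟩ := Fin.ext h1
  rw [h2]
  show t _ * u ^ (n - (m:ℕ)) * w ^ (n - (n - (m:ℕ))) = _
  rw [show n - (n - (m:ℕ)) = (m:ℕ) from by omega]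

lemma syl_rowsum_ge {R : Type*} [CommRing R] (n : ℕ) (q3 : Fin 3 → R) (u w : R)
    (t : Fin (n + 1) → R) (i : Fin (n + 2)) (hi : ¬ (i : ℕ) < n) :
    ∑ k : Fin (n + 2), sylMatrix n q3 t i k * (u ^ (n + 1 - (k : ℕ)) * w ^ (k : ℕ)) =
      u ^ (1 - ((i : ℕ) - n)) * w ^ ((i : ℕ) - n) * evalForm n t u w := by
  have hin : (i : ℕ) < n + 2 := i.isLt
  have hcase : (i : ℕ) = n ∨ (i : ℕ) = n + 1 := by omega
  rw [evalForm_rev, Finset.mul_sum]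
  rcases hcase with hc | hc
  · rw [Fin.sum_univ_castSucc]
    have hlast : sylMatrix n q3 t i (Fin.last (n+1)) = 0 := by
      simp only [sylMatrix, Matrix.of_apply, if_neg hi]
      rw [dif_neg]
      simp [Fin.last, hc]
    rw [hlast, zero_mul, add_zero]
    apply Finset.sum_congr rfl
    intro k _
    have hkn : (k : ℕ) < n + 1 := k.isLt
    have hentry : sylMatrix n q3 t i (Fin.castSucc k) = t ⟨n - (k:ℕ), by omega⟩ := by
      simp only [sylMatrix, Matrix.of_apply, if_neg hi]
      rw [dif_pos (show (i:ℕ) - n ≤ ((Fin.castSucc k : Fin (n+2)):ℕ) ∧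
        ((Fin.castSucc k : Fin (n+2)):ℕ) ≤ ((i:ℕ) - n) + n from by
          rw [Fin.coe_castSucc]; omega)]
      exact congrArg t (Fin.ext (by simp [Fin.coe_castSucc]; omega))
    rw [hentry, show ((Fin.castSucc k : Fin (n+2)):ℕ) = (k:ℕ) from Fin.coe_castSucc k,
      show n + 1 - (k:ℕ) = 1 + (n - (k:ℕ)) from by omega,
      show (i:ℕ) - n = 0 from by omega, pow_add, pow_zero, pow_one]
    ring
  · rw [Fin.sum_univ_succ]
    have hzero : sylMatrix n q3 t i 0 = 0 := by
      simp only [sylMatrix, Matrix.of_apply, if_neg hi]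
      rw [dif_neg]
      simp [hc]
    rw [hzero, zero_mul, zero_add]
    apply Finset.sum_congr rfl
    intro k _
    have hkn : (k : ℕ) < n + 1 := k.isLt
    have hentry : sylMatrix n q3 t i (Fin.succ k) = t ⟨n - (k:ℕ), by omega⟩ := by
      simp only [sylMatrix, Matrix.of_apply, if_neg hi]
      rw [dif_pos (show (i:ℕ) - n ≤ ((Fin.succ k : Fin (n+2)):ℕ) ∧
        ((Fin.succ k : Fin (n+2)):ℕ) ≤ ((i:ℕ) - n) + n from by
          rw [Fin.val_succ]; omega)]
      exact congrArg t (Fin.ext (by simp [Fin.val_succ]; omega))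
    rw [hentry, show ((Fin.succ k : Fin (n+2)):ℕ) = (k:ℕ) + 1 from Fin.val_succ k,
      show n + 1 - ((k:ℕ) + 1) = n - (k:ℕ) from by omega,
      show (i:ℕ) - n = 1 from by omega, pow_one, pow_succ]
    ring

open Matrix in
lemma sylMatrix_det_mul_eq {R : Type*} [CommRing R] (n : ℕ) (a b a' b' : R)
    (t : Fin (n + 1) → R) :
    (sylMatrix n ![a*a', -(a*b'+a'*b), b*b'] t).det * (a^n * a'^n * (a*b' - a'*b)) =
      a^n * a'^n * (a*b' - a'*b) * (evalForm n t a b * evalForm n t a' b') := by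
  classical
  set M := sylMatrix n ![a*a', -(a*b'+a'*b), b*b'] t with hM
  set D := evalForm n t a b with hD
  set D' := evalForm n t a' b' with hD'
  set V : Matrix (Fin (n+2)) (Fin (n+2)) R := Matrix.of (fun i j =>
    if (j:ℕ) = 0 then a ^ (n+1-(i:ℕ)) * b ^ (i:ℕ)
    else if (j:ℕ) = 1 then a' ^ (n+1-(i:ℕ)) * b' ^ (i:ℕ)
    else if i = j then 1 else 0) with hV
  set c : Fin n ⊕ Fin 2 ≃ Fin (n+2) :=
    (Equiv.sumComm (Fin n) (Fin 2)).trans (finSumFinEquiv.trans (finCongr (by omega))) with hc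
  set r : Fin n ⊕ Fin 2 ≃ Fin (n+2) := finSumFinEquiv with hr
  have hc1 : ∀ k : Fin n, ((c (Sum.inl k)) : ℕ) = (k:ℕ) + 2 := by
    intro k; simp [hc, finSumFinEquiv_apply_right]; try omega
  have hc2 : ∀ l : Fin 2, ((c (Sum.inr l)) : ℕ) = (l:ℕ) := by
    intro l; simp [hc, finSumFinEquiv_apply_left]
  have hr1 : ∀ k : Fin n, ((r (Sum.inl k)) : ℕ) = (k:ℕ) := by
    intro k; simp [hr, finSumFinEquiv_apply_left]
  have hr2 : ∀ l : Fin 2, ((r (Sum.inr l)) : ℕ) = n + (l:ℕ) := by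
    intro l; simp [hr, finSumFinEquiv_apply_right]
  -- determinant of V
  have hB11 : (V.submatrix c c).toBlocks₁₁ = 1 := by
    ext k k'
    simp only [Matrix.toBlocks₁₁, Matrix.submatrix_apply, hV, Matrix.of_apply]
    rw [if_neg (by rw [hc1 k']; omega), if_neg (by rw [hc1 k']; omega)]
    by_cases hkk : k = k'
    · rw [if_pos (by rw [hkk]), hkk, Matrix.one_apply_eq]
    · rw [if_neg (fun hcc => hkk (Sum.inl_injective (c.injective hcc))), Matrix.one_apply_ne]
      simpa using hkk
  have hB21 : (V.submatrix c c).toBlocks₂₁ = 0 := by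
    ext l k'
    simp only [Matrix.toBlocks₂₁, Matrix.submatrix_apply, hV, Matrix.of_apply]
    rw [if_neg (by rw [hc1 k']; omega), if_neg (by rw [hc1 k']; omega),
      if_neg (fun hcc => by
        have := congrArg (fun x : Fin (n+2) => (x:ℕ)) hcc
        simp only [hc2 l, hc1 k'] at this
        have hl2 : (l:ℕ) < 2 := l.isLt
        omega)]
    rfl
  have hB2 : (V.submatrix c c).toBlocks₂₂ =
      Matrix.of ![![a^(n+1), a'^(n+1)], ![a^n * b, a'^n * b']] := by
    ext l l'
    simp only [Matrix.toBlocks₂₂, Matrix.submatrix_apply, hV, Matrix.of_apply]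
    fin_cases l <;> fin_cases l' <;>
      simp [hc2, pow_succ, Nat.add_sub_cancel]
  have hVdet : V.det = a^n * a'^n * (a*b' - a'*b) := by
    rw [← Matrix.det_submatrix_equiv_self c V, ← Matrix.fromBlocks_toBlocks (V.submatrix c c),
      hB11, hB21, hB2, Matrix.det_fromBlocks_zero₂₁, Matrix.det_one, one_mul,
      Matrix.det_fin_two]
    simp only [Matrix.of_apply, Matrix.cons_val', Matrix.cons_val_zero, Matrix.cons_val_one,
      Matrix.head_cons, Matrix.empty_val', Matrix.cons_val_fin_one, Matrix.head_fin_const]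
    ring_nf
    try rw [pow_succ, pow_succ]
    try ring
  -- entries of M * V
  have hMV : ∀ (i j : Fin (n+2)),
      (M * V) i j =
        if (j:ℕ) = 0 then
          (if (i:ℕ) < n then 0 else a ^ (1 - ((i:ℕ)-n)) * b ^ ((i:ℕ)-n) * D)
        else if (j:ℕ) = 1 then
          (if (i:ℕ) < n then 0 else a' ^ (1 - ((i:ℕ)-n)) * b' ^ ((i:ℕ)-n) * D')
        else M i j := by
    intro i j
    rw [Matrix.mul_apply]
    by_cases hj0 : (j:ℕ) = 0
    · have hVk : ∀ k : Fin (n+2), V k j = a ^ (n+1-(k:ℕ)) * b ^ (k:ℕ) := by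
        intro k; simp only [hV, Matrix.of_apply, if_pos hj0]
      rw [Finset.sum_congr rfl (fun k _ => by rw [hVk k]), if_pos hj0]
      by_cases hi : (i:ℕ) < n
      · rw [syl_rowsum_lt n a b a' b' a b t i hi, if_pos hi]
        have hz : b * a - a * b = 0 := by ring
        rw [hz, zero_mul, mul_zero]
      · rw [syl_rowsum_ge n _ a b t i hi, if_neg hi, ← hD]
    · by_cases hj1 : (j:ℕ) = 1
      · have hVk : ∀ k : Fin (n+2), V k j = a' ^ (n+1-(k:ℕ)) * b' ^ (k:ℕ) := by
          intro k; simp only [hV, Matrix.of_apply, if_neg hj0, if_pos hj1]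
        rw [Finset.sum_congr rfl (fun k _ => by rw [hVk k]), if_neg hj0, if_pos hj1]
        by_cases hi : (i:ℕ) < n
        · rw [syl_rowsum_lt n a b a' b' a' b' t i hi, if_pos hi]
          have hz : (b * a' - a * b') * (b' * a' - a' * b') = 0 := by ring
          rw [hz, mul_zero]
        · rw [syl_rowsum_ge n _ a' b' t i hi, if_neg hi, ← hD']
      · have hVk : ∀ k : Fin (n+2), V k j = if k = j then 1 else 0 := by
          intro k; simp only [hV, Matrix.of_apply, if_neg hj0, if_neg hj1]
        rw [Finset.sum_congr rfl (fun k _ => by rw [hVk k, mul_ite, mul_one, mul_zero]),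
          Finset.sum_ite_eq' Finset.univ j (fun k => M i k), if_pos (Finset.mem_univ j),
          if_neg hj0, if_neg hj1]
  -- blocks of (M*V).submatrix r c
  have hT11 : ∀ k k' : Fin n,
      ((M*V).submatrix r c).toBlocks₁₁ k k' = M (r (Sum.inl k)) (c (Sum.inl k')) := by
    intro k k'
    simp only [Matrix.toBlocks₁₁, Matrix.submatrix_apply, Matrix.of_apply]
    rw [hMV, if_neg (by rw [hc1 k']; omega), if_neg (by rw [hc1 k']; omega)]
  have hT12 : ((M*V).submatrix r c).toBlocks₁₂ = 0 := by
    ext k l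
    simp only [Matrix.toBlocks₁₂, Matrix.submatrix_apply, Matrix.of_apply]
    rw [hMV]
    have hl : (l:ℕ) < 2 := l.isLt
    have hrk : ((r (Sum.inl k)):ℕ) < n := by rw [hr1 k]; exact k.isLt
    by_cases h0 : ((c (Sum.inr l)):ℕ) = 0
    · rw [if_pos h0, if_pos hrk]; rfl
    · rw [if_neg h0, if_pos (by rw [hc2 l] at h0 ⊢; omega), if_pos hrk]; rfl
  have vec3 : ∀ (x y z : R) (m : ℕ) (h : m < 3), m = 0 → ![x, y, z] ⟨m, h⟩ = x := by
    rintro x y z m h rfl; rfl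
  have hT11tri : (((M*V).submatrix r c).toBlocks₁₁).BlockTriangular OrderDual.toDual := by
    intro k k' hlt
    have hkk' : (k:ℕ) < (k':ℕ) := hlt
    rw [hT11 k k']
    simp only [hM, sylMatrix, Matrix.of_apply]
    rw [if_pos (by rw [hr1 k]; exact k.isLt), dif_neg (by rw [hr1 k, hc1 k']; omega)]
  have hdetT : (((M*V).submatrix r c).toBlocks₁₁).det = (a*a')^n := by
    rw [Matrix.det_of_lowerTriangular _ hT11tri]
    have hdiag : ∀ k : Fin n, ((M*V).submatrix r c).toBlocks₁₁ k k = a * a' := by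
      intro k
      rw [hT11 k k]
      simp only [hM, sylMatrix, Matrix.of_apply]
      rw [if_pos (by rw [hr1 k]; exact k.isLt), dif_pos (by rw [hr1 k, hc1 k]; omega)]
      exact vec3 _ _ _ _ _ (by rw [hr1 k, hc1 k]; omega)
    rw [Finset.prod_congr rfl (fun k _ => hdiag k), Finset.prod_const, Finset.card_univ,
      Fintype.card_fin]
  have hT22 : ((M*V).submatrix r c).toBlocks₂₂ =
      Matrix.of ![![a * D, a' * D'], ![b * D, b' * D']] := by
    ext l l'
    simp only [Matrix.toBlocks₂₂, Matrix.submatrix_apply, Matrix.of_apply]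
    rw [hMV]
    have hnl : ¬ ((r (Sum.inr l)):ℕ) < n := by rw [hr2 l]; omega
    fin_cases l <;> fin_cases l'
    · rw [if_pos (by rw [hc2]), if_neg hnl, hr2]
      simp
    · rw [if_neg (by rw [hc2]; norm_num), if_pos (by rw [hc2]), if_neg hnl, hr2]
      simp
    · rw [if_pos (by rw [hc2]), if_neg hnl, hr2]
      simp
    · rw [if_neg (by rw [hc2]; norm_num), if_pos (by rw [hc2]), if_neg hnl, hr2]
      simp
  -- the permutation relating the two index identifications
  set σp : Equiv.Perm (Fin n ⊕ Fin 2) := c.trans r.symm with hσ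
  have hsub_eq : (M*V).submatrix r c = ((M*V).submatrix r r).submatrix id σp := by
    ext i j
    simp only [Matrix.submatrix_apply, hσ, Equiv.trans_apply, Equiv.apply_symm_apply, id_eq]
  have hperm : Equiv.permCongr r σp = finRotate (n+2) * finRotate (n+2) := by
    apply Equiv.ext
    intro x
    obtain ⟨y, rfl⟩ := r.surjective x
    simp only [Equiv.permCongr_apply, Equiv.symm_apply_apply, hσ, Equiv.trans_apply,
      Equiv.Perm.mul_apply, finRotate_succ_apply, Equiv.apply_symm_apply]
    apply Fin.ext
    simp only [Fin.val_add, Fin.val_one]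
    cases y with
    | inl k =>
      have hk := k.isLt
      rw [hc1 k, hr1 k, Nat.mod_eq_of_lt (show (k:ℕ) + 1 < n + 2 from by omega),
        Nat.mod_eq_of_lt (show (k:ℕ) + 1 + 1 < n + 2 from by omega)]
    | inr l =>
      have hcl := hc2 l
      have hrl := hr2 l
      have hl2 : (l:ℕ) < 2 := l.isLt
      rw [hcl, hrl]
      rcases (by omega : (l:ℕ) = 0 ∨ (l:ℕ) = 1) with hl | hl <;> rw [hl]
      · rw [Nat.mod_eq_of_lt (show n + 0 + 1 < n + 2 from by omega),
          show n + 0 + 1 + 1 = n + 2 from by omega, Nat.mod_self]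
      · rw [show n + 1 + 1 = n + 2 from by omega, Nat.mod_self,
          Nat.mod_eq_of_lt (show 0 + 1 < n + 2 from by omega)]
  have hsign : Equiv.Perm.sign σp = 1 := by
    have hs := Equiv.Perm.sign_permCongr r σp
    rw [hperm] at hs
    rw [← hs, Equiv.Perm.sign_mul, sign_finRotate, ← pow_add]
    exact Even.neg_one_pow ⟨n + 1, by omega⟩
  have hMVdet : (M*V).det = (a*a')^n * ((a*D) * (b'*D') - (a'*D') * (b*D)) := by
    have h1 : ((M*V).submatrix r c).det = (M*V).det := by
      rw [hsub_eq, Matrix.det_permute' σp, hsign, Matrix.det_submatrix_equiv_self]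
      simp
    rw [← h1, ← Matrix.fromBlocks_toBlocks ((M*V).submatrix r c), hT12, hT22,
      Matrix.det_fromBlocks_zero₁₂, hdetT, Matrix.det_fin_two]
    simp only [Matrix.of_apply, Matrix.cons_val', Matrix.cons_val_zero, Matrix.cons_val_one,
      Matrix.head_cons, Matrix.empty_val', Matrix.cons_val_fin_one, Matrix.head_fin_const]
  calc M.det * (a^n * a'^n * (a*b' - a'*b)) = M.det * V.det := by rw [hVdet]
    _ = (M*V).det := (Matrix.det_mul M V).symm
    _ = (a*a')^n * ((a*D) * (b'*D') - (a'*D') * (b*D)) := hMVdet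
    _ = a^n * a'^n * (a*b' - a'*b) * (D * D') := by rw [mul_pow]; ring

lemma sylvesterDet_mul_eq {R : Type*} [CommRing R] (n : ℕ) (a b a' b' : R)
    (t : Fin (n + 1) → R) :
    (sylvesterDet n ![a*a', -(a*b'+a'*b), b*b'] t) * (a^n * a'^n * (a*b' - a'*b)) =
      a^n * a'^n * (a*b' - a'*b) * (evalForm n t a b * evalForm n t a' b') := by
  rw [sylvesterDet_eq]
  exact sylMatrix_det_mul_eq n a b a' b' t

open MvPolynomial in
lemma sylvesterDet_eq_prod {R : Type*} [CommRing R] (n : ℕ) (a b a' b' : R)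
    (t : Fin (n + 1) → R) :
    sylvesterDet n ![a*a', -(a*b'+a'*b), b*b'] t = evalForm n t a b * evalForm n t a' b' := by
  classical
  set A : MvPolynomial (Fin 4 ⊕ Fin (n+1)) ℤ := X (Sum.inl 0) with hA
  set B : MvPolynomial (Fin 4 ⊕ Fin (n+1)) ℤ := X (Sum.inl 1) with hB
  set A' : MvPolynomial (Fin 4 ⊕ Fin (n+1)) ℤ := X (Sum.inl 2) with hA'
  set B' : MvPolynomial (Fin 4 ⊕ Fin (n+1)) ℤ := X (Sum.inl 3) with hB'
  set T : Fin (n+1) → MvPolynomial (Fin 4 ⊕ Fin (n+1)) ℤ := fun i => X (Sum.inr i) with hT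
  have hX : A^n * A'^n * (A*B' - A'*B) ≠ 0 := by
    have h1 : (A : MvPolynomial (Fin 4 ⊕ Fin (n+1)) ℤ) ≠ 0 := X_ne_zero _
    have h2 : (A' : MvPolynomial (Fin 4 ⊕ Fin (n+1)) ℤ) ≠ 0 := X_ne_zero _
    have h3 : A*B' - A'*B ≠ 0 := by
      intro h
      have := congrArg (eval (Sum.elim ![1, 0, 0, 1] (fun _ => 0) :
        (Fin 4 ⊕ Fin (n+1)) → ℤ)) h
      simp [hA, hB, hA', hB'] at this
    exact mul_ne_zero (mul_ne_zero (pow_ne_zero _ h1) (pow_ne_zero _ h2)) h3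
  have gen : sylvesterDet n ![A*A', -(A*B'+A'*B), B*B'] T =
      evalForm n T A B * evalForm n T A' B' := by
    apply mul_right_cancel₀ hX
    rw [sylvesterDet_mul_eq n A B A' B' T]
    ring
  have hφ := congrArg (eval₂Hom (Int.castRingHom R) (Sum.elim ![a, b, a', b'] t)) gen
  rw [map_sylvesterDet, _root_.map_mul, map_evalForm, map_evalForm] at hφ
  have e1 : (eval₂Hom (Int.castRingHom R) (Sum.elim ![a, b, a', b'] t)) ∘
      (![A*A', -(A*B'+A'*B), B*B']) = ![a*a', -(a*b'+a'*b), b*b'] := by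
    funext i
    fin_cases i <;> simp [hA, hB, hA', hB']
  have e2 : (eval₂Hom (Int.castRingHom R) (Sum.elim ![a, b, a', b'] t)) ∘ T = t := by
    funext i
    simp [hT]
  have e3 : (eval₂Hom (Int.castRingHom R) (Sum.elim ![a, b, a', b'] t)) A = a := by simp [hA]
  have e4 : (eval₂Hom (Int.castRingHom R) (Sum.elim ![a, b, a', b'] t)) B = b := by simp [hB]
  have e5 : (eval₂Hom (Int.castRingHom R) (Sum.elim ![a, b, a', b'] t)) A' = a' := by simp [hA']
  have e6 : (eval₂Hom (Int.castRingHom R) (Sum.elim ![a, b, a', b'] t)) B' = b' := by simp [hB']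
  rw [e1, e2, e3, e4, e5, e6] at hφ
  exact hφ

open Polynomial in
lemma monic_deg_two_expand {F : Type*} [CommRing F] (p : F[X]) (hm : p.Monic)
    (hd : p.natDegree = 2) : p = X^2 + C (p.coeff 1) * X + C (p.coeff 0) := by
  ext k
  simp only [coeff_add, coeff_X_pow, coeff_C_mul, coeff_X, coeff_C]
  by_cases h0 : k = 0
  · subst h0; norm_num
  by_cases h1 : k = 1
  · subst h1; norm_num
  by_cases h2 : k = 2
  · subst h2
    have := hm.coeff_natDegree
    rw [hd] at this
    rw [this]
    norm_num
  · rw [Polynomial.coeff_eq_zero_of_natDegree_lt (by omega : p.natDegree < k)]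
    split_ifs <;> first | omega | simp

lemma quadratic_identity {K : Type*} [Field K] [NumberField K]
    (h2 : Module.finrank ℚ K = 2) (x : K) :
    x * (algebraMap ℚ K (Algebra.trace ℚ K x) - x) = algebraMap ℚ K (Algebra.norm ℚ x) := by
  classical
  set f := Algebra.lmul ℚ K x with hf
  have hcard : Fintype.card (Module.Free.ChooseBasisIndex ℚ K) = 2 := by
    rw [← Module.finrank_eq_card_chooseBasisIndex, h2]
  haveI : Nonempty (Module.Free.ChooseBasisIndex ℚ K) :=
    Fintype.card_pos_iff.mp (by omega)
  set b := Module.Free.chooseBasis ℚ K with hb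
  set M := LinearMap.toMatrix b b (f : Module.End ℚ K) with hMdef
  have hchar : (f : Module.End ℚ K).charpoly = M.charpoly := LinearMap.charpoly_def _
  have hdeg : (f : Module.End ℚ K).charpoly.natDegree = 2 := by
    rw [LinearMap.charpoly_natDegree, h2]
  have hmonic := LinearMap.charpoly_monic (f : Module.End ℚ K)
  have hc1 : (f : Module.End ℚ K).charpoly.coeff 1 = - Algebra.trace ℚ K x := by
    have := Matrix.trace_eq_neg_charpoly_coeff M
    rw [hcard] at this
    rw [hchar]
    rw [show (2:ℕ) - 1 = 1 from rfl] at this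
    have htr : Matrix.trace M = Algebra.trace ℚ K x := by
      rw [hMdef, ← LinearMap.trace_eq_matrix_trace ℚ b, Algebra.trace_apply]
    rw [htr] at this
    rw [this, neg_neg]
  have hc0 : (f : Module.End ℚ K).charpoly.coeff 0 = Algebra.norm ℚ x := by
    have := Matrix.det_eq_sign_charpoly_coeff M
    rw [hcard] at this
    rw [hchar]
    have hdet : M.det = Algebra.norm ℚ x := by
      rw [hMdef, LinearMap.det_toMatrix, Algebra.norm_apply]
    rw [hdet] at this
    rw [this]
    norm_num
  have hp := LinearMap.aeval_self_charpoly (f : Module.End ℚ K)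
  rw [monic_deg_two_expand _ hmonic hdeg, hc1, hc0] at hp
  simp only [map_add, map_mul, map_pow, Polynomial.aeval_X, Polynomial.aeval_C, map_neg] at hp
  have h1 := congrArg (fun g : Module.End ℚ K => g 1) hp
  simp only [LinearMap.add_apply, Module.End.mul_apply, LinearMap.zero_apply, pow_two,
    Module.algebraMap_end_apply, LinearMap.neg_apply, hf] at h1
  have hfx : ∀ y : K, f y = x * y := fun y => rfl
  rw [hfx, hfx] at h1
  ring_nf at h1 ⊢
  simp only [Algebra.smul_def, mul_one] at h1 ⊢
  linear_combination -h1

open NumberField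

theorem stmt2 {K : Type*} [Field K] [NumberField K]
    (h2 : Module.finrank ℚ K = 2)
    (α β : 𝓞 K) (hI : Ideal.span {α, β} ≠ ⊥)
    (A B C : ℤ)
    (hA : A * (Ideal.absNorm (Ideal.span {α, β}) : ℤ) = Algebra.norm ℤ β)
    (hC : C * (Ideal.absNorm (Ideal.span {α, β}) : ℤ) = Algebra.norm ℤ α)
    (hB : (A + B + C) * (Ideal.absNorm (Ideal.span {α, β}) : ℤ) = Algebra.norm ℤ (α - β))
    (n : ℕ) (t : Fin (n + 1) → ℤ) :
    (sylvesterDet n ![C, B, A] t = 1 ∨ sylvesterDet n ![C, B, A] t = -1) ↔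
      Ideal.span {α, β} ^ n =
        Ideal.span {∑ i : Fin (n + 1), (t i : 𝓞 K) * α ^ (i : ℕ) * β ^ (n - (i : ℕ))} := by
  classical
  set N : ℕ := Ideal.absNorm (Ideal.span {α, β}) with hN
  set δ : 𝓞 K := ∑ i : Fin (n + 1), (t i : 𝓞 K) * α ^ (i : ℕ) * β ^ (n - (i : ℕ)) with hδ
  -- the conjugation map
  set σ : K →ₗ[ℚ] K := ((Algebra.linearMap ℚ K) ∘ₗ (Algebra.trace ℚ K)) - LinearMap.id with hσdef
  have hσ : ∀ x : K, σ x = algebraMap ℚ K (Algebra.trace ℚ K x) - x := by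
    intro x
    simp [hσdef, LinearMap.sub_apply, LinearMap.comp_apply, Algebra.linearMap_apply]
  have hconj : ∀ x : K, x * σ x = algebraMap ℚ K (Algebra.norm ℚ x) := by
    intro x; rw [hσ]; exact quadratic_identity h2 x
  have hσmul : ∀ x y : K, σ (x * y) = σ x * σ y := by
    intro x y
    by_cases hx : x = 0
    · simp [hx]
    by_cases hy : y = 0
    · simp [hy]
    have hxy : x * y ≠ 0 := mul_ne_zero hx hy
    apply mul_left_cancel₀ hxy
    rw [hconj (x*y), _root_.map_mul (Algebra.norm ℚ), _root_.map_mul (algebraMap ℚ K),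
      ← hconj x, ← hconj y]
    ring
  have hσone : σ (1 : K) = 1 := by
    have := hconj 1
    simpa using this
  have hσpow : ∀ (x : K) (k : ℕ), σ (x ^ k) = (σ x) ^ k := by
    intro x k
    induction k with
    | zero => simpa using hσone
    | succ m ih => rw [pow_succ, pow_succ, hσmul, ih]
  have hσint : ∀ m : ℤ, σ ((m : K)) = (m : K) := by
    intro m
    have : ((m : K)) = algebraMap ℚ K ((m : ℚ)) := by rw [map_intCast]
    rw [this, hσ, Algebra.trace_algebraMap, h2]
    push_cast
    ring
  -- norm of an algebraic integer as x * σ x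
  have hnormK : ∀ x : 𝓞 K, ((Algebra.norm ℤ x : ℤ) : K) = (x : K) * σ (x : K) := by
    intro x
    have h' : ((Algebra.norm ℤ x : ℤ) : ℚ) = Algebra.norm ℚ (x : K) := Algebra.coe_norm_int x
    calc ((Algebra.norm ℤ x : ℤ) : K) = algebraMap ℚ K ((Algebra.norm ℤ x : ℤ) : ℚ) := by
          rw [map_intCast]
      _ = algebraMap ℚ K (Algebra.norm ℚ (x : K)) := by rw [h']
      _ = (x : K) * σ (x : K) := (hconj _).symm
  -- the key integer identity
  have hkey : (N : ℤ) ^ n * sylvesterDet n ![C, B, A] t = Algebra.norm ℤ δ := by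
    apply Int.cast_injective (α := K)
    push_cast
    have hms := map_sylvesterDet (Int.castRingHom K) n ![C, B, A] t
    simp only [Int.coe_castRingHom] at hms
    rw [hms]
    have e1 : (Int.cast : ℤ → K) ∘ ![C, B, A] = ![(C:K), (B:K), (A:K)] := by
      funext k; fin_cases k <;> simp
    rw [e1, smul_sylvesterDet n ((N:ℕ):K) ![(C:K), (B:K), (A:K)] ((Int.cast : ℤ → K) ∘ t)]
    have e2 : (fun k => ((N:ℕ):K) * ![(C:K), (B:K), (A:K)] k) =
        ![(α:K)*(σ (α:K)), -((α:K)*(σ (β:K)) + (σ (α:K))*(β:K)), (β:K)*(σ (β:K))] := by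
      have hCN : ((C:K)) * ((N:ℕ):K) = (α:K) * σ (α:K) := by
        rw [← hnormK α, ← hC]
        push_cast
        ring
      have hAN : ((A:K)) * ((N:ℕ):K) = (β:K) * σ (β:K) := by
        rw [← hnormK β, ← hA]
        push_cast
        ring
      have hBN : ((B:K)) * ((N:ℕ):K) =
          -((α:K) * σ (β:K) + (σ (α:K)) * (β:K)) := by
        have h3 : ((Algebra.norm ℤ (α - β) : ℤ) : K) =
            ((α:K) - (β:K)) * (σ (α:K) - σ (β:K)) := by
          rw [hnormK (α - β)]
          push_cast
          rw [map_sub σ]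
        have h4 : ((A:K) + (B:K) + (C:K)) * ((N:ℕ):K) =
            ((α:K) - (β:K)) * (σ (α:K) - σ (β:K)) := by
          rw [← h3, ← hB]
          push_cast
          ring
        have h5 := h4
        rw [add_mul, add_mul, hAN, hCN] at h5
        linear_combination h5
      funext k
      fin_cases k
      · show ((N:ℕ):K) * (C:K) = (α:K) * σ ((α:K))
        linear_combination hCN
      · show ((N:ℕ):K) * (B:K) = -((α:K) * σ ((β:K)) + σ ((α:K)) * (β:K))
        linear_combination hBN
      · show ((N:ℕ):K) * (A:K) = (β:K) * σ ((β:K))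
        linear_combination hAN
    rw [e2, sylvesterDet_eq_prod n ((α:K)) ((β:K)) (σ ((α:K))) (σ ((β:K)))
      ((Int.cast : ℤ → K) ∘ t)]
    have hδK : evalForm n ((Int.cast : ℤ → K) ∘ t) ((α:K)) ((β:K)) = ((δ : 𝓞 K) : K) := by
      rw [hδ, evalForm]
      push_cast
      rfl
    have hσδ : evalForm n ((Int.cast : ℤ → K) ∘ t) (σ ((α:K))) (σ ((β:K))) =
        σ (evalForm n ((Int.cast : ℤ → K) ∘ t) ((α:K)) ((β:K))) := by
      rw [evalForm, evalForm, map_sum σ]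
      apply Finset.sum_congr rfl
      intro i _
      rw [hσmul, hσmul, hσpow, hσpow]
      simp only [Function.comp_apply]
      rw [hσint (t i)]
    rw [hσδ, hδK, ← hnormK δ]
  -- now the equivalence
  have hαI : α ∈ Ideal.span {α, β} := Ideal.subset_span (by simp)
  have hβI : β ∈ Ideal.span {α, β} := Ideal.subset_span (by simp)
  have hle : Ideal.span {δ} ≤ Ideal.span {α, β} ^ n := by
    rw [Ideal.span_le, Set.singleton_subset_iff]
    rw [hδ]
    apply Ideal.sum_mem
    intro i _
    have hin : (i:ℕ) ≤ n := by omega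
    have hmem : α ^ (i:ℕ) * β ^ (n - (i:ℕ)) ∈ Ideal.span {α, β} ^ n := by
      have hpe : Ideal.span {α, β} ^ ((i:ℕ) + (n - (i:ℕ))) = Ideal.span {α, β} ^ n := by
        rw [show (i:ℕ) + (n - (i:ℕ)) = n from by omega]
      rw [← hpe, pow_add]
      exact Ideal.mul_mem_mul (Ideal.pow_mem_pow hαI _) (Ideal.pow_mem_pow hβI _)
    rw [mul_assoc]
    exact Ideal.mul_mem_left _ _ hmem
  have hN0 : N ≠ 0 := by
    rw [hN]
    simpa [Ideal.absNorm_eq_zero_iff] using hI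
  constructor
  · intro hres
    have habs : Ideal.absNorm (Ideal.span {δ}) = N ^ n := by
      rw [Ideal.absNorm_span_singleton, ← hkey]
      rcases hres with h | h <;> rw [h] <;> simp [Int.natAbs_mul, Int.natAbs_pow]
    obtain ⟨J, hJ⟩ := Ideal.dvd_iff_le.mpr hle
    have hJn := congrArg Ideal.absNorm hJ
    rw [habs, _root_.map_mul, map_pow] at hJn
    have hJ1 : Ideal.absNorm J = 1 := by
      have hNn : (N : ℕ) ^ n ≠ 0 := pow_ne_zero _ hN0
      have := hJn
      nth_rewrite 1 [← mul_one (N ^ n)] at this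
      exact (Nat.eq_of_mul_eq_mul_left (Nat.pos_of_ne_zero hNn) this).symm
    rw [Ideal.absNorm_eq_one_iff] at hJ1
    rw [hJ1, Ideal.mul_top] at hJ
    exact hJ.symm
  · intro hid
    have habs : (Algebra.norm ℤ δ).natAbs = N ^ n := by
      rw [← Ideal.absNorm_span_singleton δ, ← hid, map_pow]
    have h := Int.natAbs_eq (Algebra.norm ℤ δ)
    rw [habs] at h
    push_cast at h
    have hNn : ((N:ℤ)) ^ n ≠ 0 := pow_ne_zero _ (Int.natCast_ne_zero.mpr hN0)
    rcases h with h | h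
    · left
      apply mul_left_cancel₀ hNn
      rw [hkey, mul_one, h]
    · right
      apply mul_left_cancel₀ hNn
      rw [hkey, h]
      ring
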